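/- It is possible to partition ℝ into countably many subsets A₁, B₁, A₂, B₂, … such that A_j ⊔ f_j(B_j) = ℝ for every j ≥ 1, where each f_j is a Lebesgue-measure-preserving bijection of ℝ of the form x ↦ σ_j(⌊x⌋) + (x - ⌊x⌋) for a permutation σ_j of ℤ. -/

import Mathlib

open Set MeasureTheory

/-- The piecewise rigid extension of a permutation of ℤ to ℝ. -/
noncomputable def pwr (σ : Equiv.Perm ℤ) : ℝ → ℝ :=
  fun x => (σ ⌊x⌋ : ℝ) + (x - ⌊x⌋)

lemma pwr_floor (σ : Equiv.Perm ℤ) (x : ℝ) : ⌊pwr σ x⌋ = σ ⌊x⌋ := by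
  unfold pwr
  rw [Int.floor_intCast_add]
  have : ⌊x - (⌊x⌋ : ℝ)⌋ = 0 := by
    rw [Int.floor_eq_zero_iff]
    constructor
    · simp [Int.floor_le x]
    · have h := Int.lt_floor_add_one x
      linarith
  omega

lemma pwr_leftInv (σ : Equiv.Perm ℤ) : Function.LeftInverse (pwr σ.symm) (pwr σ) := by
  intro x
  have h := pwr_floor σ x
  show (σ.symm ⌊pwr σ x⌋ : ℝ) + (pwr σ x - ⌊pwr σ x⌋) = x
  rw [h]
  simp [pwr]

lemma pwr_bijective (σ : Equiv.Perm ℤ) : Function.Bijective (pwr σ) :=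
  ⟨(pwr_leftInv σ).injective, fun y => ⟨pwr σ.symm y, by
    have := pwr_leftInv σ.symm y; simpa using this⟩⟩

lemma pwr_measurable (σ : Equiv.Perm ℤ) : Measurable (pwr σ) := by
  unfold pwr
  have h1 : Measurable fun x : ℝ => (σ ⌊x⌋ : ℝ) :=
    (measurable_from_top (f := fun n : ℤ => (σ n : ℝ))).comp Int.measurable_floor
  have h2 : Measurable fun x : ℝ => (⌊x⌋ : ℝ) :=
    (measurable_from_top (f := fun n : ℤ => (n : ℝ))).comp Int.measurable_floor
  exact h1.add (measurable_id.sub h2)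

lemma floor_eq_of_Ico {n : ℤ} {x : ℝ} (h : x ∈ Set.Ico (n : ℝ) (n + 1)) : ⌊x⌋ = n :=
  Int.floor_eq_iff.2 ⟨h.1, by exact_mod_cast h.2⟩

lemma vol_eq_tsum {t : Set ℝ} (ht : MeasurableSet t) :
    volume t = ∑' n : ℤ, volume (t ∩ Ico (n : ℝ) (n + 1)) := by
  conv_lhs => rw [← inter_univ t, ← iUnion_Ico_intCast (α := ℝ), inter_iUnion]
  rw [measure_iUnion]
  · intro i j hij
    refine (Set.disjoint_left.2 fun x hx hx' => ?_).mono inter_subset_right inter_subset_right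
    exact hij (by rw [← floor_eq_of_Ico hx, floor_eq_of_Ico hx'])
  · exact fun n => ht.inter measurableSet_Ico

lemma pwr_measurePreserving (σ : Equiv.Perm ℤ) :
    MeasurePreserving (pwr σ) volume volume := by
  refine ⟨pwr_measurable σ, Measure.ext fun s hs => ?_⟩
  rw [Measure.map_apply (pwr_measurable σ) hs]
  have hpre : MeasurableSet (pwr σ ⁻¹' s) := (pwr_measurable σ) hs
  rw [vol_eq_tsum hpre, vol_eq_tsum hs,
    ← Equiv.tsum_eq σ (fun m : ℤ => volume (s ∩ Ico (m : ℝ) (m + 1)))]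
  congr 1
  funext n
  have key : (pwr σ ⁻¹' s) ∩ Ico (n : ℝ) (n + 1)
      = (· + ((σ n : ℝ) - n)) ⁻¹' (s ∩ Ico (σ n : ℝ) (σ n + 1)) := by
    ext x
    simp only [mem_inter_iff, mem_preimage, mem_Ico]
    constructor
    · rintro ⟨hxs, hx⟩
      have hf : ⌊x⌋ = n := floor_eq_of_Ico hx
      have : pwr σ x = x + ((σ n : ℝ) - n) := by simp [pwr, hf]; ring
      refine ⟨by rwa [← this], by constructor <;> [linarith [hx.1]; linarith [hx.2]]⟩
    · rintro ⟨hxs, hx⟩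
      have hx' : x ∈ Set.Ico (n : ℝ) (n + 1) := ⟨by linarith [hx.1], by linarith [hx.2]⟩
      have hf : ⌊x⌋ = n := floor_eq_of_Ico hx'
      have : pwr σ x = x + ((σ n : ℝ) - n) := by simp [pwr, hf]; ring
      exact ⟨by rwa [this], hx'.1, hx'.2⟩
  rw [key, measure_preimage_add_right]

lemma pwr_rightInv (σ : Equiv.Perm ℤ) : Function.RightInverse (pwr σ.symm) (pwr σ) := by
  intro y
  have h := pwr_leftInv σ.symm y
  simpa using h

lemma pwr_image (σ : Equiv.Perm ℤ) (s : Set ℤ) :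
    pwr σ '' {x : ℝ | ⌊x⌋ ∈ s} = {x : ℝ | ⌊x⌋ ∈ σ '' s} := by
  ext y
  constructor
  · rintro ⟨x, hx, rfl⟩
    exact ⟨⌊x⌋, hx, (pwr_floor σ x).symm⟩
  · rintro ⟨n, hn, hny⟩
    refine ⟨pwr σ.symm y, ?_, pwr_rightInv σ y⟩
    show ⌊pwr σ.symm y⌋ ∈ s
    rw [pwr_floor σ.symm y, ← hny]
    simpa using hn

lemma exists_perm_image (S T : Set ℤ) (hS : S.Infinite) (hT : T.Infinite)
    (hS' : Sᶜ.Infinite) (hT' : Tᶜ.Infinite) : ∃ σ : Equiv.Perm ℤ, σ '' S = T := by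
  classical
  haveI := hS.to_subtype
  haveI := hT.to_subtype
  haveI := hS'.to_subtype
  haveI := hT'.to_subtype
  obtain ⟨φ⟩ : Nonempty (↥S ≃ ↥T) := nonempty_equiv_of_countable
  obtain ⟨ψ0⟩ : Nonempty (↥Sᶜ ≃ ↥Tᶜ) := nonempty_equiv_of_countable
  let ψ : {x // ¬ x ∈ S} ≃ {x // ¬ x ∈ T} :=
    ((Equiv.subtypeEquivRight (fun x => (Set.mem_compl_iff S x).symm)).trans ψ0).trans
      (Equiv.subtypeEquivRight (fun x => Set.mem_compl_iff T x))
  refine ⟨Equiv.subtypeCongr φ ψ, ?_⟩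
  have hmem : ∀ x (hx : x ∈ S), Equiv.subtypeCongr φ ψ x = (φ ⟨x, hx⟩ : ℤ) := by
    intro x hx
    simp [Equiv.subtypeCongr, Equiv.sumCompl_symm_apply_of_pos hx]
  ext y
  constructor
  · rintro ⟨x, hx, rfl⟩
    rw [hmem x hx]
    exact (φ ⟨x, hx⟩).2
  · intro hy
    refine ⟨(φ.symm ⟨y, hy⟩ : ℤ), (φ.symm ⟨y, hy⟩).2, ?_⟩
    rw [hmem _ (φ.symm ⟨y, hy⟩).2]
    simp

lemma infinite_fiber (e : ℕ × ℤ ≃ ℤ) (k : ℕ) : {m : ℤ | (e.symm m).1 = k}.Infinite := by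
  apply Set.infinite_of_injective_forall_mem (f := fun z : ℤ => e (k, z))
  · intro z w h
    have := e.injective h
    exact (Prod.ext_iff.1 this).2
  · intro z
    simp [Set.mem_setOf_eq]

theorem real_line_countable_paradoxical :
    ∃ (A B : ℕ → Set ℝ) (σ : ℕ → Equiv.Perm ℤ),
      (⋃ j, A j ∪ B j) = Set.univ ∧
      (∀ i j, i ≠ j → Disjoint (A i) (A j)) ∧
      (∀ i j, i ≠ j → Disjoint (B i) (B j)) ∧
      (∀ i j, Disjoint (A i) (B j)) ∧
      (∀ j, Function.Bijective (pwr (σ j)) ∧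
        MeasureTheory.MeasurePreserving (pwr (σ j))
          MeasureTheory.volume MeasureTheory.volume) ∧
      ∀ j, Disjoint (A j) (pwr (σ j) '' B j) ∧
        A j ∪ pwr (σ j) '' B j = Set.univ := by
  classical
  obtain ⟨e⟩ : Nonempty (ℕ × ℤ ≃ ℤ) := nonempty_equiv_of_countable
  set a : ℕ → Set ℤ := fun j => {m : ℤ | (e.symm m).1 = 2 * j} with ha
  set b : ℕ → Set ℤ := fun j => {m : ℤ | (e.symm m).1 = 2 * j + 1} with hb
  have hab : ∀ j, b j ⊆ (a j)ᶜ := fun j m hm hm' => by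
    simp only [ha, hb, Set.mem_setOf_eq] at hm hm'; omega
  have hba : ∀ j, a j ⊆ (b j)ᶜ := fun j m hm hm' => by
    simp only [ha, hb, Set.mem_setOf_eq] at hm hm'; omega
  have hσ : ∀ j, ∃ σ : Equiv.Perm ℤ, σ '' (b j) = (a j)ᶜ := fun j =>
    exists_perm_image _ _ (infinite_fiber e _) ((infinite_fiber e (2*j+1)).mono (hab j))
      ((infinite_fiber e (2*j)).mono (hba j)) (by rw [compl_compl]; exact infinite_fiber e _)
  choose σ hσ using hσ
  refine ⟨fun j => {x : ℝ | ⌊x⌋ ∈ a j}, fun j => {x : ℝ | ⌊x⌋ ∈ b j}, σ, ?_, ?_, ?_, ?_, ?_, ?_⟩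
  · ext x
    simp only [Set.mem_iUnion, Set.mem_union, Set.mem_setOf_eq, Set.mem_univ, iff_true]
    set k := (e.symm ⌊x⌋).1 with hk
    refine ⟨k / 2, ?_⟩
    simp only [ha, hb, Set.mem_setOf_eq, ← hk]
    omega
  · intro i j hij
    rw [Set.disjoint_left]
    intro x hx hx'
    simp only [ha, Set.mem_setOf_eq] at hx hx'
    exact hij (by omega)
  · intro i j hij
    rw [Set.disjoint_left]
    intro x hx hx'
    simp only [hb, Set.mem_setOf_eq] at hx hx'
    exact hij (by omega)
  · intro i j
    rw [Set.disjoint_left]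
    intro x hx hx'
    simp only [ha, hb, Set.mem_setOf_eq] at hx hx'
    omega
  · exact fun j => ⟨pwr_bijective (σ j), pwr_measurePreserving (σ j)⟩
  · intro j
    have himg : pwr (σ j) '' {x : ℝ | ⌊x⌋ ∈ b j} = {x : ℝ | ⌊x⌋ ∈ a j}ᶜ := by
      rw [pwr_image, hσ j]
      ext x
      simp [Set.mem_compl_iff]
    rw [himg]
    exact ⟨disjoint_compl_right, Set.union_compl_self _⟩
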